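/- Let k ≥ 2 and ℓ ≥ 1 be integers, let i ∈ {0,…,k−1}, and let S_i^k be the set of vertices of ST_k^ℓ whose entry in position 0 equals i. For every vertex v not in S_i^k, the subgraph of ST_k^ℓ induced on {v} ∪ (N(v) ∩ S_i^k), where N(v) is the set of neighbors of v, is isomorphic to the complete bipartite star K_{1,ℓ} with center v: v is adjacent to each of the ℓ vertices of N(v) ∩ S_i^k, and these ℓ vertices are pairwise non-adjacent. -/

import Mathlib

/-- A string of length `k*l` over the alphabet `Fin k` in which every symbol
occurs exactly `l` times (an `l`-set permutation). -/
def IsMSP (k l : ℕ) (v : Fin (k * l) → Fin k) : Prop :=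
  ∀ a : Fin k, (Finset.univ.filter fun i => v i = a).card = l

/-- The vertex set of the star `l`-set transposition graph `ST_k^l`. -/
abbrev MSP (k l : ℕ) : Type := {v : Fin (k * l) → Fin k // IsMSP k l v}

/-- Star-transposition adjacency: `w` is obtained from `v` by transposing position `0`
with a position `i ≠ 0` whose entry differs from that of position `0`. -/
def STAdj (k l : ℕ) (v w : Fin (k * l) → Fin k) : Prop :=
  ∃ i j : Fin (k * l), (j : ℕ) = 0 ∧ i ≠ j ∧ v i ≠ v j ∧ w = v ∘ Equiv.swap j i

/-- The star `l`-set transposition graph `ST_k^l`. -/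
def STGraph (k l : ℕ) : SimpleGraph (MSP k l) :=
  SimpleGraph.fromRel fun v w => STAdj k l v.1 w.1

lemma msp_comp (k l : ℕ) (v : Fin (k*l) → Fin k) (hv : IsMSP k l v)
    (σ : Equiv.Perm (Fin (k*l))) : IsMSP k l (v ∘ σ) := by
  intro a
  have key : (Finset.univ.filter fun m => (v ∘ σ) m = a).card
      = (Finset.univ.filter fun m => v m = a).card := by
    apply Finset.card_bij (fun m _ => σ m)
    · intro m hm
      simp only [Finset.mem_filter, Finset.mem_univ, true_and, Function.comp_apply] at hm ⊢
      exact hm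
    · intro m _ n _ h
      exact σ.injective h
    · intro n hn
      simp only [Finset.mem_filter, Finset.mem_univ, true_and] at hn ⊢
      exact ⟨σ.symm n, by simp [hn], by simp⟩
  rw [key]; exact hv a

lemma stadj_iff (k l : ℕ) (a b : Fin (k*l) → Fin k) (z : Fin (k*l)) (hz : (z:ℕ) = 0) :
    STAdj k l a b ↔ ∃ j, j ≠ z ∧ a j ≠ a z ∧ b = a ∘ Equiv.swap z j := by
  constructor
  · rintro ⟨i, j, hj, hij, hne, rfl⟩
    have : j = z := Fin.ext (by rw [hj, hz])
    subst this
    exact ⟨i, hij, hne, rfl⟩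
  · rintro ⟨j, hjz, hne, rfl⟩
    exact ⟨j, z, hz, hjz, hne, rfl⟩

lemma stadj_symm (k l : ℕ) (a b : Fin (k*l) → Fin k) (h : STAdj k l a b) : STAdj k l b a := by
  obtain ⟨i, j, hj, hij, hne, rfl⟩ := h
  refine ⟨i, j, hj, hij, ?_, ?_⟩
  · simp only [Function.comp_apply, Equiv.swap_apply_left, Equiv.swap_apply_right]
    exact fun h => hne h.symm
  · funext m
    simp [Function.comp, Equiv.swap_apply_self]

lemma adj_iff (k l : ℕ) (v w : MSP k l) (z : Fin (k*l)) (hz : (z:ℕ) = 0) :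
    (STGraph k l).Adj v w ↔ ∃ j, j ≠ z ∧ v.1 j ≠ v.1 z ∧ w.1 = v.1 ∘ Equiv.swap z j := by
  rw [STGraph, SimpleGraph.fromRel_adj]
  constructor
  · rintro ⟨hne, h | h⟩
    · exact (stadj_iff k l v.1 w.1 z hz).mp h
    · exact (stadj_iff k l v.1 w.1 z hz).mp (stadj_symm k l w.1 v.1 h)
  · rintro ⟨j, hjz, hne, heq⟩
    refine ⟨?_, Or.inl ((stadj_iff k l v.1 w.1 z hz).mpr ⟨j, hjz, hne, heq⟩)⟩
    intro hvw
    apply hne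
    have h1 : w.1 z = v.1 j := by
      rw [heq]; simp [Equiv.swap_apply_left]
    rw [← hvw] at h1
    exact h1.symm

lemma adj_zero_ne (k l : ℕ) (v w : MSP k l) (z : Fin (k*l)) (hz : (z:ℕ) = 0)
    (h : (STGraph k l).Adj v w) : w.1 z ≠ v.1 z := by
  obtain ⟨j, hjz, hne, heq⟩ := (adj_iff k l v w z hz).mp h
  have h1 : w.1 z = v.1 j := by rw [heq]; simp [Equiv.swap_apply_left]
  rw [h1]; exact hne

/-- for `v ∉ S_i^k`, the subgraph induced on `{v} ∪ (N(v) ∩ S_i^k)` is a star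
`K_{1,l}` with center `v`: `v` is adjacent to each of the `l` vertices of `N(v) ∩ S_i^k`,
and these are pairwise non-adjacent. -/
theorem stmt3 (k l : ℕ) (hk : 2 ≤ k) (hl : 1 ≤ l) (i : Fin k)
    (S : Set (MSP k l))
    (hS : S = {v : MSP k l | v.1 ⟨0, Nat.mul_pos (by omega) (by omega)⟩ = i}) :
    ∀ v : MSP k l, v ∉ S →
      ((STGraph k l).neighborSet v ∩ S).ncard = l ∧
      (∀ s ∈ (STGraph k l).neighborSet v ∩ S, (STGraph k l).Adj v s) ∧
      (∀ s ∈ (STGraph k l).neighborSet v ∩ S, ∀ t ∈ (STGraph k l).neighborSet v ∩ S,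
        s ≠ t → ¬ (STGraph k l).Adj s t) ∧
      ∃ e : completeBipartiteGraph (Fin 1) (Fin l) ≃g
          (STGraph k l).induce ({v} ∪ ((STGraph k l).neighborSet v ∩ S)),
        e (Sum.inl 0) = ⟨v, Set.mem_union_left _ rfl⟩ := by
  classical
  intro v hv
  have hkl : 0 < k * l := Nat.mul_pos (by omega) (by omega)
  set z : Fin (k * l) := ⟨0, hkl⟩ with hzdef
  have hz : (z : ℕ) = 0 := rfl
  have hvS : ∀ w : MSP k l, w ∈ S ↔ w.1 z = i := by
    intro w; rw [hS]; exact Iff.rfl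
  have hv0 : v.1 z ≠ i := fun h => hv ((hvS v).mpr h)
  -- non-adjacency inside S
  have hNS : ∀ s t : MSP k l, s ∈ S → t ∈ S → ¬ (STGraph k l).Adj s t := by
    intro s t hs ht hadj
    exact adj_zero_ne k l s t z hz hadj (((hvS t).mp ht).trans ((hvS s).mp hs).symm)
  set T : Set (MSP k l) := (STGraph k l).neighborSet v ∩ S with hTdef
  have hTS : ∀ s ∈ T, s ∈ S := fun s hs => hs.2
  have hTadj : ∀ s ∈ T, (STGraph k l).Adj v s := fun s hs => hs.1
  -- description of T as an image
  have hmsp : ∀ j : Fin (k * l), IsMSP k l (v.1 ∘ Equiv.swap z j) :=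
    fun j => msp_comp k l v.1 v.2 (Equiv.swap z j)
  set g : Fin (k * l) → MSP k l := fun j => ⟨v.1 ∘ Equiv.swap z j, hmsp j⟩ with hgdef
  set A : Set (Fin (k * l)) := {j | v.1 j = i} with hAdef
  have hgval : ∀ j, (g j).1 z = v.1 j := by
    intro j; simp [hgdef, Equiv.swap_apply_left]
  have hT : T = g '' A := by
    ext w
    constructor
    · rintro ⟨hw1, hw2⟩
      obtain ⟨j, hjz, hne, heq⟩ := (adj_iff k l v w z hz).mp hw1
      have hwz : w.1 z = v.1 j := by rw [heq]; simp [Equiv.swap_apply_left]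
      refine ⟨j, ?_, ?_⟩
      · rw [hAdef]; simpa [← hwz] using (hvS w).mp hw2
      · exact Subtype.ext heq.symm
    · rintro ⟨j, hj, rfl⟩
      have hji : v.1 j = i := hj
      have hjz : j ≠ z := fun h => hv0 (h ▸ hji)
      constructor
      · exact (adj_iff k l v (g j) z hz).mpr ⟨j, hjz, fun h => hv0 (h.symm.trans hji), rfl⟩
      · exact (hvS (g j)).mpr ((hgval j).trans hji)
  have hinj : Set.InjOn g A := by
    intro j hj j' hj' hgg
    by_contra hne
    have hji : v.1 j = i := hj
    have hjz : j ≠ z := fun h => hv0 (h ▸ hji)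
    have h1 : (g j).1 j = v.1 z := by simp [hgdef, Equiv.swap_apply_right]
    have h2 : (g j').1 j = v.1 j := by
      simp only [hgdef, Function.comp_apply]
      rw [Equiv.swap_apply_of_ne_of_ne hjz hne]
    rw [hgg] at h1
    exact hv0 ((h1.symm.trans h2).trans hji)
  have hAn : A.ncard = l := by
    have hAf : A = ↑(Finset.univ.filter fun j => v.1 j = i) := by
      ext j; simp [hAdef]
    rw [hAf, Set.ncard_coe_finset]
    exact v.2 i
  have hTn : T.ncard = l := by rw [hT, Set.ncard_image_of_injOn hinj, hAn]
  refine ⟨hTn, hTadj, fun s hs t ht _ => hNS s t (hTS s hs) (hTS t ht), ?_⟩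
  -- build the isomorphism
  have hvT : v ∉ T := fun h => hv (hTS v h)
  haveI : Fintype ↥T := Fintype.ofFinite _
  have hcard : Fintype.card ↥T = l := by
    rw [← Set.toFinset_card, ← Set.ncard_eq_toFinset_card', hTn]
  have e2 : Fin l ≃ ↥T := (Fintype.equivFinOfCardEq hcard).symm
  have e1 : Fin 1 ≃ ↥({v} : Set (MSP k l)) := Equiv.ofUnique _ _
  have hdisj : Disjoint ({v} : Set (MSP k l)) T := by
    rw [Set.disjoint_left]
    rintro x rfl
    exact hvT
  set eU : (Fin 1 ⊕ Fin l) ≃ ↥(({v} : Set (MSP k l)) ∪ T) :=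
    (Equiv.sumCongr e1 e2).trans (Equiv.Set.union hdisj).symm with heU
  have hval1 : ∀ x : Fin 1, ((eU (Sum.inl x)) : MSP k l) = v := fun x => (e1 x).2
  have hmem2 : ∀ y : Fin l, ((eU (Sum.inr y)) : MSP k l) ∈ T := fun y => (e2 y).2
  refine ⟨⟨eU, ?_⟩, ?_⟩
  · intro a b
    rcases a with x | y <;> rcases b with x' | y'
    · simp only [SimpleGraph.comap_adj, Function.Embedding.coe_subtype,
        completeBipartiteGraph_adj]
      rw [hval1 x, hval1 x']
      exact iff_of_false (SimpleGraph.irrefl _) (by simp)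
    · simp only [SimpleGraph.comap_adj, Function.Embedding.coe_subtype,
        completeBipartiteGraph_adj]
      rw [hval1 x]
      exact iff_of_true (hTadj _ (hmem2 y')) (by simp)
    · simp only [SimpleGraph.comap_adj, Function.Embedding.coe_subtype,
        completeBipartiteGraph_adj]
      rw [hval1 x']
      exact iff_of_true ((STGraph k l).adj_symm (hTadj _ (hmem2 y))) (by simp)
    · simp only [SimpleGraph.comap_adj, Function.Embedding.coe_subtype,
        completeBipartiteGraph_adj]
      exact iff_of_false (hNS _ _ (hTS _ (hmem2 y)) (hTS _ (hmem2 y'))) (by simp)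
  · exact Subtype.ext (hval1 0)
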